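/- Let a = (a_j)_{j∈ℤ} be a two-sided sequence of complex numbers with ∑_j |a_j| r^j < ∞ for all r > 0, M(a; w) = ∑_j a_j w^j, and for a strictly decreasing n ∈ ℤ^l let Δ_n(z) = det(z_i^{n_j}) and M_n(a; z) = Δ_n(z) ∏_{i=1}^l M(a; z_i). Then the Laurent coefficient of M_n(a; z) at the monomial z^k = z_1^{k_1}⋯z_l^{k_l} equals the determinant f_{k,n} = det(a_{k_j - n_i})_{i,j=1}^l, i.e., M_n(a; z) = ∑_{k∈ℤ^l} f_{k,n} z^k. -/

import Mathlib

lemma shift_tsum (a : ℤ → ℂ)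
    (ha : ∀ r : ℝ, 0 < r → Summable (fun j : ℤ => ‖a j‖ * r ^ j))
    (z : ℂ) (hz : z ≠ 0) (c : ℤ) :
    Summable (fun m : ℤ => ‖a (m - c) * z ^ m‖) ∧
    ∑' m : ℤ, a (m - c) * z ^ m = z ^ c * ∑' j : ℤ, a j * z ^ j := by
  have hz' : (0:ℝ) < ‖z‖ := norm_pos_iff.mpr hz
  have hsum : Summable (fun j : ℤ => ‖a j * z ^ j‖) := by
    simpa [norm_mul, norm_zpow] using ha ‖z‖ hz'
  have hcomp : ∀ j : ℤ, ((fun m : ℤ => ‖a (m - c) * z ^ m‖) ∘ (Equiv.addRight c)) j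
      = ‖a j * z ^ j‖ * ‖z‖ ^ c := by
    intro j
    simp [Function.comp, zpow_add₀ hz, norm_mul, norm_zpow, mul_assoc]
  constructor
  · rw [← (Equiv.addRight c).summable_iff]
    exact Summable.congr (hsum.mul_right (‖z‖ ^ c)) fun j => (hcomp j).symm
  · rw [← (Equiv.addRight c).tsum_eq]
    have : ∀ j : ℤ, a ((Equiv.addRight c) j - c) * z ^ ((Equiv.addRight c) j : ℤ)
        = z ^ c * (a j * z ^ j) := by
      intro j
      simp [zpow_add₀ hz]
      ring
    rw [tsum_congr this, tsum_mul_left]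

lemma pi_tsum : ∀ (l : ℕ) (f : Fin l → ℤ → ℂ), (∀ i, Summable (fun m => ‖f i m‖)) →
    Summable (fun k : Fin l → ℤ => ‖∏ i, f i (k i)‖) ∧
    ∑' k : Fin l → ℤ, ∏ i, f i (k i) = ∏ i, ∑' m : ℤ, f i m := by
  intro l
  induction l with
  | zero =>
    intro f _
    constructor
    · exact Summable.of_finite
    · simp
  | succ l ih =>
    intro f hf
    obtain ⟨hs, he⟩ := ih (fun i => f i.succ) (fun i => hf i.succ)
    let e : (Fin (l+1) → ℤ) ≃ ℤ × (Fin l → ℤ) := (Fin.consEquiv (fun _ => ℤ)).symm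
    let g : ℤ × (Fin l → ℤ) → ℂ := fun p => f 0 p.1 * ∏ i : Fin l, f i.succ (p.2 i)
    have hge : ∀ k : Fin (l+1) → ℤ, ∏ i, f i (k i) = g (e k) := by
      intro k
      simp only [g, e, Fin.consEquiv]
      rw [Fin.prod_univ_succ]
      rfl
    have hgnorm : Summable (fun p : ℤ × (Fin l → ℤ) => ‖g p‖) := by
      have := (hf 0).mul_of_nonneg hs (fun _ => norm_nonneg _) (fun _ => norm_nonneg _)
      exact this.congr fun p => by simp [g, norm_mul]
    constructor
    · exact (e.summable_iff.mpr hgnorm).congr fun k => by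
        rw [Function.comp_apply, ← hge]
    · calc ∑' k : Fin (l+1) → ℤ, ∏ i, f i (k i) = ∑' k, g (e k) := tsum_congr hge
        _ = ∑' p, g p := e.tsum_eq g
        _ = (∑' m, f 0 m) * ∑' k : Fin l → ℤ, ∏ i : Fin l, f i.succ (k i) :=
            (tsum_mul_tsum_of_summable_norm (hf 0) hs).symm
        _ = ∏ i, ∑' m : ℤ, f i m := by rw [he, Fin.prod_univ_succ]

/-- Generating function lemma: if `a = (a_j)_{j∈ℤ}` satisfies `∑_j |a_j| r^j < ∞`
for all `r > 0`, `M(a;w) = ∑_j a_j w^j`, `Δ_n(z) = det(z_i^{n_j})` and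
`M_n(a;z) = Δ_n(z) ∏_i M(a;z_i)`, then the Laurent expansion of `M_n(a;z)` is
`∑_{k ∈ ℤ^l} f_{k,n} z^k` with `f_{k,n} = det(a_{k_j - n_i})`, the series converging
absolutely. -/
theorem generating_function_laurent (l : ℕ) (hl : 1 ≤ l) (a : ℤ → ℂ)
    (ha : ∀ r : ℝ, 0 < r → Summable (fun j : ℤ => ‖a j‖ * r ^ j))
    (n : Fin l → ℤ) (hn : StrictAnti n)
    (z : Fin l → ℂ) (hz : ∀ i, z i ≠ 0) :
    Summable (fun k : Fin l → ℤ =>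
      ‖Matrix.det (fun i j : Fin l => a (k j - n i)) * ∏ i, z i ^ k i‖) ∧
    ∑' k : Fin l → ℤ,
        Matrix.det (fun i j : Fin l => a (k j - n i)) * ∏ i, z i ^ k i =
      Matrix.det (fun i j : Fin l => z i ^ n j) * ∏ i, ∑' j : ℤ, a j * z i ^ j := by
  classical
  -- for each permutation σ, the factored family
  set F : Equiv.Perm (Fin l) → Fin l → ℤ → ℂ :=
    fun σ j m => a (m - n (σ j)) * z j ^ m with hF
  have hFnorm : ∀ σ j, Summable (fun m => ‖F σ j m‖) :=
    fun σ j => (shift_tsum a ha (z j) (hz j) (n (σ j))).1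
  have hpi : ∀ σ, Summable (fun k : Fin l → ℤ => ‖∏ j, F σ j (k j)‖) ∧
      ∑' k : Fin l → ℤ, ∏ j, F σ j (k j) = ∏ j, ∑' m : ℤ, F σ j m :=
    fun σ => pi_tsum l (F σ) (hFnorm σ)
  -- pointwise expansion of the determinant
  have hpt : ∀ k : Fin l → ℤ,
      Matrix.det (fun i j : Fin l => a (k j - n i)) * ∏ i, z i ^ k i
        = ∑ σ : Equiv.Perm (Fin l), ((Equiv.Perm.sign σ : ℤ) : ℂ) * ∏ j, F σ j (k j) := by
    intro k
    rw [Matrix.det_apply' (fun i j : Fin l => a (k j - n i)), Finset.sum_mul]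
    refine Finset.sum_congr rfl fun σ _ => ?_
    rw [mul_assoc]
    congr 1
    rw [← Finset.prod_mul_distrib]
  have hsgn : ∀ σ : Equiv.Perm (Fin l), ‖((Equiv.Perm.sign σ : ℤ) : ℂ)‖ = 1 := by
    intro σ
    rcases Int.units_eq_one_or (Equiv.Perm.sign σ) with h | h <;> simp [h]
  constructor
  · -- summability
    refine Summable.of_nonneg_of_le (fun _ => norm_nonneg _)
      (fun k => ?_) (summable_sum (s := Finset.univ)
        (fun σ _ => ((hpi σ).1 : Summable fun k : Fin l → ℤ => ‖∏ j, F σ j (k j)‖)))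
    rw [hpt k]
    refine (norm_sum_le _ _).trans_eq ?_
    refine Finset.sum_congr rfl fun σ _ => ?_
    rw [norm_mul, hsgn, one_mul]
  · rw [tsum_congr hpt, Summable.tsum_finsetSum
      (fun σ _ => (((hpi σ).1).of_norm.mul_left _))]
    have hterm : ∀ σ : Equiv.Perm (Fin l),
        ∑' k : Fin l → ℤ, ((Equiv.Perm.sign σ : ℤ) : ℂ) * ∏ j, F σ j (k j)
          = ((Equiv.Perm.sign σ : ℤ) : ℂ) * ((∏ j, z j ^ n (σ j)) * ∏ i, ∑' m : ℤ, a m * z i ^ m) := by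
      intro σ
      rw [tsum_mul_left, (hpi σ).2]
      congr 1
      rw [← Finset.prod_mul_distrib]
      exact Finset.prod_congr rfl fun j _ => (shift_tsum a ha (z j) (hz j) (n (σ j))).2
    rw [Finset.sum_congr rfl fun σ _ => hterm σ]
    have hdet : Matrix.det (fun i j : Fin l => z i ^ n j)
        = ∑ σ : Equiv.Perm (Fin l), ((Equiv.Perm.sign σ : ℤ) : ℂ) * ∏ j, z j ^ n (σ j) := by
      rw [← Matrix.det_transpose (fun i j : Fin l => z i ^ n j), Matrix.det_apply']
      exact Finset.sum_congr rfl fun σ _ => rfl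
    rw [hdet, Finset.sum_mul]
    exact Finset.sum_congr rfl fun σ _ => by ring
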